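/- Let f ∈ S̃_n be a bounded affine permutation (a bijection of ℤ with f(i+n) = f(i)+n and i ≤ f(i) ≤ i+n for all i) of displacement k. For each i ∈ ℤ define Ĩ_i = { j ∈ {i, i+1, ..., i+n−1} : f^{-1}(j) < i }. Then (a) |Ĩ_i| = k for every i, and (b) Ĩ_i \ {i} ⊆ Ĩ_{i+1} for every i. -/

import Mathlib

open Finset

private noncomputable def Iset16 (n : ℕ) (f : ℤ ≃ ℤ) (i : ℤ) : Finset ℤ :=
  (Finset.Icc i (i + (n : ℤ) - 1)).filter fun j => f.symm j < i

private lemma windowSum16 (n : ℕ) (φ : ℤ → ℤ)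
    (hφ : ∀ i : ℤ, φ (i + n) = φ i) (a : ℤ) :
    ∑ j ∈ Icc a (a + (n : ℤ) - 1), φ j = ∑ j ∈ Icc (1 : ℤ) (n : ℤ), φ j := by
  have step : ∀ b : ℤ, ∑ j ∈ Icc (b + 1) (b + 1 + (n : ℤ) - 1), φ j
      = ∑ j ∈ Icc b (b + (n : ℤ) - 1), φ j := by
    intro b
    have hn0 : 0 ≤ (n : ℤ) := Int.natCast_nonneg n
    have e1 : Icc b (b + (n : ℤ)) = insert b (Icc (b + 1) (b + (n : ℤ))) := by
      ext x; simp only [mem_Icc, mem_insert]; omega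
    have e2 : Icc b (b + (n : ℤ)) = insert (b + (n : ℤ)) (Icc b (b + (n : ℤ) - 1)) := by
      ext x; simp only [mem_Icc, mem_insert]; omega
    have h1 : b ∉ Icc (b + 1) (b + (n : ℤ)) := by simp only [mem_Icc]; omega
    have h2 : b + (n : ℤ) ∉ Icc b (b + (n : ℤ) - 1) := by simp only [mem_Icc]; omega
    have E1 : ∑ j ∈ Icc b (b + (n : ℤ)), φ j
        = φ b + ∑ j ∈ Icc (b + 1) (b + (n : ℤ)), φ j := by
      rw [e1, Finset.sum_insert h1]
    have E2 : ∑ j ∈ Icc b (b + (n : ℤ)), φ j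
        = φ (b + (n : ℤ)) + ∑ j ∈ Icc b (b + (n : ℤ) - 1), φ j := by
      rw [e2]; rw [Finset.sum_insert h2]
    have hb : φ (b + (n : ℤ)) = φ b := hφ b
    have hr : b + 1 + (n : ℤ) - 1 = b + (n : ℤ) := by ring
    rw [hr]
    linarith [E1, E2]
  refine Int.inductionOn' a 1 ?_ ?_ ?_
  · have : (1 : ℤ) + n - 1 = n := by ring
    rw [this]
  · intro b _ ih
    rw [step b]; exact ih
  · intro b _ ih
    have h := step (b - 1)
    have hb1 : b - 1 + 1 = b := by ring
    rw [hb1] at h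
    rw [← h]; exact ih

section Main

variable (n : ℕ) (f : ℤ ≃ ℤ)

private lemma symm_le16 (hbdd : ∀ i : ℤ, i ≤ f i ∧ f i ≤ i + n) (j : ℤ) :
    f.symm j ≤ j := by
  have h := (hbdd (f.symm j)).1
  rwa [Equiv.apply_symm_apply] at h

private lemma symm_ge16 (hbdd : ∀ i : ℤ, i ≤ f i ∧ f i ≤ i + n) (j : ℤ) :
    j - n ≤ f.symm j := by
  have h := (hbdd (f.symm j)).2
  rw [Equiv.apply_symm_apply] at h
  omega

private lemma stepCard16 (hn : 1 ≤ n)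
    (hbdd : ∀ i : ℤ, i ≤ f i ∧ f i ≤ i + n) (i : ℤ) :
    (Iset16 n f (i + 1)).card = (Iset16 n f i).card := by
  by_cases hfi : f i = i
  · have hset : Iset16 n f (i + 1) = Iset16 n f i := by
      ext j
      simp only [Iset16, mem_filter, mem_Icc]
      have A := symm_le16 n f hbdd j
      have B := symm_ge16 n f hbdd j
      have C : f.symm j = i ↔ j = i := by rw [Equiv.symm_apply_eq, hfi]
      omega
    rw [hset]
  · have hlt : i < f i := lt_of_le_of_ne (hbdd i).1 (Ne.symm hfi)
    have hle : f i ≤ i + n := (hbdd i).2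
    have hsi : f.symm i < i := by
      have h1 := symm_le16 n f hbdd i
      rcases lt_or_eq_of_le h1 with h | h
      · exact h
      · exfalso; apply hfi
        have h2 := congrArg f h
        rw [Equiv.apply_symm_apply] at h2
        exact h2.symm
    have himem : i ∈ Iset16 n f i := by
      simp only [Iset16, mem_filter, mem_Icc]
      refine ⟨⟨le_refl i, by omega⟩, hsi⟩
    have hfinot : f i ∉ (Iset16 n f i).erase i := by
      intro h
      have h2 := Finset.mem_of_mem_erase h
      simp only [Iset16, mem_filter] at h2
      have : f.symm (f i) = i := Equiv.symm_apply_apply f i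
      omega
    have hset : Iset16 n f (i + 1) = insert (f i) ((Iset16 n f i).erase i) := by
      ext j
      simp only [Iset16, mem_insert, mem_erase, mem_filter, mem_Icc]
      have A := symm_le16 n f hbdd j
      have B := symm_ge16 n f hbdd j
      have C : f.symm j = i ↔ j = f i := Equiv.symm_apply_eq f
      omega
    rw [hset, Finset.card_insert_of_notMem hfinot, Finset.card_erase_of_mem himem]
    have : 0 < (Iset16 n f i).card := Finset.card_pos.mpr ⟨i, himem⟩
    omega

private lemma constCard16 (hn : 1 ≤ n)
    (hbdd : ∀ i : ℤ, i ≤ f i ∧ f i ≤ i + n) (i : ℤ) :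
    (Iset16 n f i).card = (Iset16 n f 1).card := by
  refine Int.inductionOn' i 1 rfl ?_ ?_
  · intro b _ ih
    rw [stepCard16 n f hn hbdd b]; exact ih
  · intro b _ ih
    have h := stepCard16 n f hn hbdd (b - 1)
    have hb1 : b - 1 + 1 = b := by ring
    rw [hb1] at h
    rw [← h]; exact ih

private lemma cardB16 (hbdd : ∀ i : ℤ, i ≤ f i ∧ f i ≤ i + n) (i : ℤ) :
    (Iset16 n f i).card
      = ((Finset.Icc (i - (n : ℤ)) (i - 1)).filter fun m => i ≤ f m).card := by
  refine Finset.card_nbij' (fun j => f.symm j) (fun m => f m) ?_ ?_ ?_ ?_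
  · intro j hj
    simp only [Iset16, mem_coe, mem_filter, mem_Icc] at hj
    have B := symm_ge16 n f hbdd j
    simp only [mem_coe, mem_filter, mem_Icc, Equiv.apply_symm_apply]
    omega
  · intro m hm
    simp only [mem_coe, mem_filter, mem_Icc] at hm
    have h1 := (hbdd m).1
    have h2 := (hbdd m).2
    simp only [Iset16, mem_coe, mem_filter, mem_Icc, Equiv.symm_apply_apply]
    omega
  · intro j _; exact Equiv.apply_symm_apply f j
  · intro m _; exact Equiv.symm_apply_apply f m

end Main

/-- Let `f ∈ S̃_n` be a bounded affine permutation of displacement `k`, and for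
`i ∈ ℤ` set `Ĩ_i = { j ∈ {i, …, i+n−1} : f⁻¹(j) < i }`.  Then every `Ĩ_i` has exactly
`k` elements, and `Ĩ_i \ {i} ⊆ Ĩ_{i+1}` (the Grassmann necklace condition). -/
theorem stmt16 (n : ℕ) (hn : 1 ≤ n) (f : ℤ ≃ ℤ)
    (hf : ∀ i : ℤ, f (i + n) = f i + n)
    (hbdd : ∀ i : ℤ, i ≤ f i ∧ f i ≤ i + n)
    (k : ℕ) (hk : (n : ℤ) * (k : ℤ) = ∑ j ∈ Finset.Icc (1 : ℤ) (n : ℤ), (f j - j)) :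
    (∀ i : ℤ, ((Finset.Icc i (i + (n : ℤ) - 1)).filter fun j => f.symm j < i).card = k) ∧
    (∀ i : ℤ, ((Finset.Icc i (i + (n : ℤ) - 1)).filter fun j => f.symm j < i) \ {i} ⊆
        (Finset.Icc (i + 1) (i + (n : ℤ))).filter fun j => f.symm j < i + 1) := by
  have hE : ∀ m : ℤ, f (m + n) - (m + n) = f m - m := by
    intro m; rw [hf m]; ring
  -- the big count: n * k = n * card (Iset16 n f 1)
  have hchain : (n : ℤ) * (k : ℤ) = (n : ℤ) * ((Iset16 n f 1).card : ℤ) := by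
    have step1 : (n : ℤ) * (k : ℤ)
        = ∑ m ∈ Icc (1 : ℤ) (n : ℤ), ∑ s ∈ Icc (0 : ℤ) ((n : ℤ) - 1),
            (if (n : ℤ) - s ≤ f m - m then (1 : ℤ) else 0) := by
      rw [hk]
      refine Finset.sum_congr rfl ?_
      intro m _
      have h0 : 0 ≤ f m - m := by have := (hbdd m).1; omega
      have h1 : f m - m ≤ n := by have := (hbdd m).2; omega
      rw [Finset.sum_boole]
      have hfil : (Icc (0 : ℤ) ((n : ℤ) - 1)).filter (fun s => (n : ℤ) - s ≤ f m - m)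
          = Icc ((n : ℤ) - (f m - m)) ((n : ℤ) - 1) := by
        ext s; simp only [mem_filter, mem_Icc]; omega
      rw [hfil, Int.card_Icc]
      omega
    have step2 : ∀ s ∈ Icc (0 : ℤ) ((n : ℤ) - 1),
        ∑ m ∈ Icc (1 : ℤ) (n : ℤ), (if (n : ℤ) - s ≤ f m - m then (1 : ℤ) else 0)
          = ∑ i ∈ Icc (1 : ℤ) (n : ℤ),
              (if (n : ℤ) - s ≤ f (i - n + s) - (i - n + s) then (1 : ℤ) else 0) := by
      intro s hs
      simp only [mem_Icc] at hs
      set φ : ℤ → ℤ := fun i => if (n : ℤ) - s ≤ f (i - n + s) - (i - n + s) then (1 : ℤ) else 0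
        with hφdef
      have hφ : ∀ i : ℤ, φ (i + n) = φ i := by
        intro i
        simp only [hφdef]
        have : i + (n : ℤ) - n + s = (i - n + s) + n := by ring
        rw [this, hE]
      have hw := windowSum16 n φ hφ ((n : ℤ) - s + 1)
      have hend : (n : ℤ) - s + 1 + (n : ℤ) - 1 = ((n : ℤ) - s) + (n : ℤ) := by ring
      rw [hend] at hw
      have hmap : Icc ((n : ℤ) - s + 1) ((n : ℤ) - s + (n : ℤ))
          = (Icc (1 : ℤ) (n : ℤ)).map (addLeftEmbedding ((n : ℤ) - s)) := by
        rw [map_add_left_Icc]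
      rw [hmap, Finset.sum_map] at hw
      rw [← hw]
      refine Finset.sum_congr rfl ?_
      intro m _
      simp only [hφdef, addLeftEmbedding_apply]
      have : (n : ℤ) - s + m - n + s = m := by ring
      rw [this]
    have step3 : ∀ i ∈ Icc (1 : ℤ) (n : ℤ),
        ∑ s ∈ Icc (0 : ℤ) ((n : ℤ) - 1),
            (if (n : ℤ) - s ≤ f (i - n + s) - (i - n + s) then (1 : ℤ) else 0)
          = ((Iset16 n f i).card : ℤ) := by
      intro i _
      rw [cardB16 n f hbdd i]
      rw [← Finset.sum_boole]
      have hmap : Icc (i - (n : ℤ)) (i - 1)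
          = (Icc (0 : ℤ) ((n : ℤ) - 1)).map (addLeftEmbedding (i - (n : ℤ))) := by
        rw [map_add_left_Icc]
        congr 1 <;> ring
      rw [hmap, Finset.sum_map]
      refine Finset.sum_congr rfl ?_
      intro s _
      simp only [addLeftEmbedding_apply]
      congr 1
      simp only [eq_iff_iff]
      omega
    calc (n : ℤ) * (k : ℤ)
        = ∑ m ∈ Icc (1 : ℤ) (n : ℤ), ∑ s ∈ Icc (0 : ℤ) ((n : ℤ) - 1),
            (if (n : ℤ) - s ≤ f m - m then (1 : ℤ) else 0) := step1
      _ = ∑ s ∈ Icc (0 : ℤ) ((n : ℤ) - 1), ∑ m ∈ Icc (1 : ℤ) (n : ℤ),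
            (if (n : ℤ) - s ≤ f m - m then (1 : ℤ) else 0) := Finset.sum_comm
      _ = ∑ s ∈ Icc (0 : ℤ) ((n : ℤ) - 1), ∑ i ∈ Icc (1 : ℤ) (n : ℤ),
            (if (n : ℤ) - s ≤ f (i - n + s) - (i - n + s) then (1 : ℤ) else 0) :=
          Finset.sum_congr rfl step2
      _ = ∑ i ∈ Icc (1 : ℤ) (n : ℤ), ∑ s ∈ Icc (0 : ℤ) ((n : ℤ) - 1),
            (if (n : ℤ) - s ≤ f (i - n + s) - (i - n + s) then (1 : ℤ) else 0) :=
          Finset.sum_comm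
      _ = ∑ i ∈ Icc (1 : ℤ) (n : ℤ), ((Iset16 n f i).card : ℤ) :=
          Finset.sum_congr rfl step3
      _ = ∑ i ∈ Icc (1 : ℤ) (n : ℤ), ((Iset16 n f 1).card : ℤ) := by
          refine Finset.sum_congr rfl ?_
          intro i _
          rw [constCard16 n f hn hbdd i]
      _ = (n : ℤ) * ((Iset16 n f 1).card : ℤ) := by
          rw [Finset.sum_const, Int.card_Icc]
          have : ((n : ℤ) + 1 - 1).toNat = n := by omega
          rw [this]
          simp [mul_comm]
  have hkey : (Iset16 n f 1).card = k := by
    have hn0 : (n : ℤ) ≠ 0 := by positivity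
    have := mul_left_cancel₀ hn0 hchain.symm
    exact_mod_cast this
  constructor
  · intro i
    have := constCard16 n f hn hbdd i
    rw [hkey] at this
    exact this
  · intro i j hj
    simp only [Finset.mem_sdiff, Finset.mem_singleton, Finset.mem_filter,
      Finset.mem_Icc] at hj ⊢
    obtain ⟨⟨⟨h1, h2⟩, h3⟩, h4⟩ := hj
    omega
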